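/- arXiv:2302.09717 — 4 statements merged into one kernel-verified Lean document; each statement's English description precedes it below -/
import Mathlib

section
/- (Quartic achievability, double-IRS) Assume h_{n1,n2} = u^{(1)}_{n1} u^{(2)}_{n2} with all factors nonzero. Let δ_1 = (1/N)Σ|u^{(1)}_{n1}| and δ_2 = (1/N)Σ|u^{(2)}_{n2}|. Suppose for each n1 there is θ'_{n1} with |θ'_{n1} - (η - arg u^{(1)}_{n1})| ≤ β₁ < π/2 (mod 2π, η fixed), and for each n2 there is θ'_{n2} with angular distance at most β₂ < π/2 from arg(d) - arg(ξ_{n2}) where d = h_{0,0} + Σ_{n1} h_{n1,0} e^{iθ'_{n1}} ≠ 0 and ξ_{n2} = h_{0,n2} + Σ_{n1} h_{n1,n2} e^{iθ'_{n1}}. If additionally |h_{0,n2}| ≤ (1/2)|Σ_{n1} h_{n1,n2} e^{iθ'_{n1}}| for all n2, then |g(θ'_{n1}, θ'_{n2})|² ≥ ((1/2) cos(β₂) cos(β₁) N² δ_1 δ_2)², where g is the effective double-IRS channel. -/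
open Real Complex

set_option maxHeartbeats 1000000

noncomputable def angDist (a b : ℝ) : ℝ := |((↑(a - b) : Real.Angle)).toReal|

private lemma cos_ge_of_angDist {t β : ℝ} (hβ : β ≤ π)
    (h : |((t : Real.Angle)).toReal| ≤ β) : Real.cos β ≤ Real.cos t := by
  have h2 := Real.cos_le_cos_of_nonneg_of_le_pi (abs_nonneg _) hβ h
  rwa [Real.cos_abs, Real.Angle.cos_toReal, Real.Angle.cos_coe] at h2

private lemma re_mul_exp (z : ℂ) (φ : ℝ) :
    (z * Complex.exp ((φ : ℂ) * Complex.I)).re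
      = ‖z‖ * Real.cos (Complex.arg z + φ) := by
  have hz : z * Complex.exp ((φ : ℂ) * Complex.I)
      = ((‖z‖ : ℝ) : ℂ) * Complex.exp (((Complex.arg z + φ : ℝ) : ℂ) * Complex.I) := by
    conv_lhs => rw [← Complex.norm_mul_exp_arg_mul_I z]
    rw [mul_assoc, ← Complex.exp_add]
    push_cast
    ring_nf
  rw [hz, Complex.re_ofReal_mul, Complex.exp_ofReal_mul_I_re]

private lemma re_ge_cos (z : ℂ) (φ ψ β : ℝ) (hβ : β ≤ π)
    (h : angDist φ (ψ - Complex.arg z) ≤ β) :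
    ‖z‖ * Real.cos β ≤ (z * Complex.exp (((φ - ψ : ℝ) : ℂ) * Complex.I)).re := by
  rw [re_mul_exp]
  refine mul_le_mul_of_nonneg_left ?_ (norm_nonneg z)
  apply cos_ge_of_angDist hβ
  have he : Complex.arg z + (φ - ψ) = φ - (ψ - Complex.arg z) := by ring
  rw [he]
  exact h

theorem double_irs_quartic_achievability (N : ℕ)
    (u1 u2 : Fin N → ℂ) (hu1 : ∀ n, u1 n ≠ 0) (hu2 : ∀ n, u2 n ≠ 0)
    (h00 : ℂ) (h10 h01 : Fin N → ℂ)
    (h : Fin N → Fin N → ℂ) (hdef : ∀ n1 n2, h n1 n2 = u1 n1 * u2 n2)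
    (δ1 δ2 : ℝ)
    (hδ1 : δ1 = (1 / N) * ∑ n1, ‖u1 n1‖)
    (hδ2 : δ2 = (1 / N) * ∑ n2, ‖u2 n2‖)
    (η β1 β2 : ℝ) (hβ1a : 0 ≤ β1) (hβ1b : β1 < π / 2)
    (hβ2a : 0 ≤ β2) (hβ2b : β2 < π / 2)
    (θ1 θ2 : Fin N → ℝ)
    (hθ1 : ∀ n1, angDist (θ1 n1) (η - Complex.arg (u1 n1)) ≤ β1)
    (d : ℂ)
    (hd : d = h00 + ∑ n1, h10 n1 * Complex.exp ((θ1 n1 : ℂ) * Complex.I))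
    (hd0 : d ≠ 0)
    (ξ : Fin N → ℂ)
    (hξ : ∀ n2, ξ n2 = h01 n2 + ∑ n1, h n1 n2 * Complex.exp ((θ1 n1 : ℂ) * Complex.I))
    (hθ2 : ∀ n2, angDist (θ2 n2) (Complex.arg d - Complex.arg (ξ n2)) ≤ β2)
    (hweak : ∀ n2, ‖h01 n2‖ ≤
      (1 / 2) * ‖(∑ n1, h n1 n2 * Complex.exp ((θ1 n1 : ℂ) * Complex.I))‖) :
    ((1 / 2) * Real.cos β2 * Real.cos β1 * (N : ℝ) ^ 2 * δ1 * δ2) ^ 2 ≤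
      ‖(h00
        + (∑ n1, h10 n1 * Complex.exp ((θ1 n1 : ℂ) * Complex.I))
        + (∑ n2, h01 n2 * Complex.exp ((θ2 n2 : ℂ) * Complex.I))
        + ∑ n1, ∑ n2, h n1 n2 *
            Complex.exp (((θ1 n1 + θ2 n2 : ℝ) : ℂ) * Complex.I))‖ ^ 2 := by
  have hπ : (0:ℝ) < π := Real.pi_pos
  have hβ1π : β1 ≤ π := hβ1b.le.trans (by linarith)
  have hβ2π : β2 ≤ π := hβ2b.le.trans (by linarith)
  have cb1 : 0 < Real.cos β1 := Real.cos_pos_of_mem_Ioo ⟨by linarith, hβ1b⟩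
  have cb2 : 0 < Real.cos β2 := Real.cos_pos_of_mem_Ioo ⟨by linarith, hβ2b⟩
  set S : ℂ := ∑ n1, u1 n1 * Complex.exp ((θ1 n1 : ℂ) * Complex.I) with hS
  -- Step 1 : |S| ≥ cos β1 * Σ |u1|
  have hS1 : Real.cos β1 * ∑ n1, ‖u1 n1‖ ≤ ‖S‖ := by
    have h2 : ∑ n1, ‖u1 n1‖ * Real.cos β1
        ≤ (∑ n1, u1 n1 * Complex.exp (((θ1 n1 - η : ℝ) : ℂ) * Complex.I)).re := by
      rw [Complex.re_sum]
      exact Finset.sum_le_sum fun n1 _ => re_ge_cos _ _ _ _ hβ1π (hθ1 n1)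
    have h4 : (∑ n1, u1 n1 * Complex.exp (((θ1 n1 - η : ℝ) : ℂ) * Complex.I))
        = S * Complex.exp (((-η : ℝ) : ℂ) * Complex.I) := by
      rw [hS, Finset.sum_mul]
      refine Finset.sum_congr rfl fun n1 _ => ?_
      rw [mul_assoc, ← Complex.exp_add]
      push_cast
      ring_nf
    have h5 := (h2.trans (Complex.re_le_norm _))
    rw [h4, norm_mul, Complex.norm_exp_ofReal_mul_I, mul_one] at h5
    calc Real.cos β1 * ∑ n1, ‖u1 n1‖
        = ∑ n1, ‖u1 n1‖ * Real.cos β1 := by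
          rw [Finset.mul_sum]; exact Finset.sum_congr rfl fun _ _ => mul_comm _ _
      _ ≤ _ := h5
  -- inner sums equal u2 * S
  have hinner : ∀ n2, (∑ n1, h n1 n2 * Complex.exp ((θ1 n1 : ℂ) * Complex.I)) = u2 n2 * S := by
    intro n2
    rw [hS, Finset.mul_sum]
    exact Finset.sum_congr rfl fun n1 _ => by rw [hdef]; ring
  -- Step 2 : |ξ n2| ≥ (1/2)|u2 n2||S|
  have hξabs : ∀ n2, (1/2) * (‖u2 n2‖ * ‖S‖) ≤ ‖ξ n2‖ := by
    intro n2
    have hw := hweak n2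
    rw [hinner n2, norm_mul] at hw
    have h5 : ‖u2 n2 * S‖ ≤ ‖ξ n2‖ + ‖h01 n2‖ := by
      have he : u2 n2 * S = ξ n2 + (-h01 n2) := by rw [hξ n2, hinner n2]; ring
      calc ‖u2 n2 * S‖ = ‖ξ n2 + (-h01 n2)‖ := by rw [he]
        _ ≤ ‖ξ n2‖ + ‖-h01 n2‖ := norm_add_le _ _
        _ = ‖ξ n2‖ + ‖h01 n2‖ := by rw [norm_neg]
    rw [norm_mul] at h5
    linarith
  -- Step 3 : rewrite the channel
  have hexp : ∀ (a b : ℝ), Complex.exp (((a + b : ℝ) : ℂ) * Complex.I)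
      = Complex.exp ((a : ℂ) * Complex.I) * Complex.exp ((b : ℂ) * Complex.I) := by
    intro a b
    rw [← Complex.exp_add]
    push_cast
    ring_nf
  have hG : h00 + (∑ n1, h10 n1 * Complex.exp ((θ1 n1 : ℂ) * Complex.I))
        + (∑ n2, h01 n2 * Complex.exp ((θ2 n2 : ℂ) * Complex.I))
        + ∑ n1, ∑ n2, h n1 n2 * Complex.exp (((θ1 n1 + θ2 n2 : ℝ) : ℂ) * Complex.I)
      = d + ∑ n2, ξ n2 * Complex.exp ((θ2 n2 : ℂ) * Complex.I) := by
    have h6 : ∑ n2, ξ n2 * Complex.exp ((θ2 n2 : ℂ) * Complex.I)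
        = (∑ n2, h01 n2 * Complex.exp ((θ2 n2 : ℂ) * Complex.I))
          + ∑ n1, ∑ n2, h n1 n2 * Complex.exp (((θ1 n1 + θ2 n2 : ℝ) : ℂ) * Complex.I) := by
      have hpt : ∀ n2 : Fin N, ξ n2 * Complex.exp ((θ2 n2 : ℂ) * Complex.I)
          = h01 n2 * Complex.exp ((θ2 n2 : ℂ) * Complex.I)
            + ∑ n1, h n1 n2 * Complex.exp (((θ1 n1 + θ2 n2 : ℝ) : ℂ) * Complex.I) := by
        intro n2
        rw [hξ n2, add_mul, Finset.sum_mul]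
        congr 1
        exact Finset.sum_congr rfl fun n1 _ => by rw [hexp]; ring
      rw [Finset.sum_congr rfl fun n2 _ => hpt n2, Finset.sum_add_distrib, Finset.sum_comm]
    rw [hd, h6]
    ring
  -- Step 4 : |G| ≥ cos β2 * Σ |ξ|
  have hGabs : Real.cos β2 * ∑ n2, ‖ξ n2‖
      ≤ ‖d + ∑ n2, ξ n2 * Complex.exp ((θ2 n2 : ℂ) * Complex.I)‖ := by
    set G : ℂ := d + ∑ n2, ξ n2 * Complex.exp ((θ2 n2 : ℂ) * Complex.I) with hGdef
    have h8 : (G * Complex.exp (((-Complex.arg d : ℝ) : ℂ) * Complex.I)).re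
        = (d * Complex.exp (((-Complex.arg d : ℝ) : ℂ) * Complex.I)).re
          + ∑ n2, (ξ n2 * Complex.exp (((θ2 n2 - Complex.arg d : ℝ) : ℂ) * Complex.I)).re := by
      rw [hGdef, add_mul, Finset.sum_mul, Complex.add_re, Complex.re_sum]
      congr 1
      refine Finset.sum_congr rfl fun n2 _ => congrArg Complex.re ?_
      rw [mul_assoc, ← Complex.exp_add]
      push_cast
      ring_nf
    have h9 : (d * Complex.exp (((-Complex.arg d : ℝ) : ℂ) * Complex.I)).re = ‖d‖ := by
      rw [re_mul_exp]
      simp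
    have h10 : ‖d‖ + ∑ n2, ‖ξ n2‖ * Real.cos β2
        ≤ (G * Complex.exp (((-Complex.arg d : ℝ) : ℂ) * Complex.I)).re := by
      rw [h8, h9]
      exact add_le_add_right
        (Finset.sum_le_sum fun n2 _ => re_ge_cos _ _ _ _ hβ2π (hθ2 n2)) _
    have h11 : (G * Complex.exp (((-Complex.arg d : ℝ) : ℂ) * Complex.I)).re
        ≤ ‖G‖ := by
      calc (G * Complex.exp (((-Complex.arg d : ℝ) : ℂ) * Complex.I)).re
          ≤ ‖G * Complex.exp (((-Complex.arg d : ℝ) : ℂ) * Complex.I)‖ :=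
            Complex.re_le_norm _
        _ = ‖G‖ := by rw [norm_mul, Complex.norm_exp_ofReal_mul_I, mul_one]
    calc Real.cos β2 * ∑ n2, ‖ξ n2‖
        = ∑ n2, ‖ξ n2‖ * Real.cos β2 := by
          rw [Finset.mul_sum]; exact Finset.sum_congr rfl fun _ _ => mul_comm _ _
      _ ≤ ‖d‖ + ∑ n2, ‖ξ n2‖ * Real.cos β2 :=
          le_add_of_nonneg_left (norm_nonneg d)
      _ ≤ _ := h10.trans h11
  -- arithmetic with δ's
  have hδ1' : (N : ℝ) * δ1 = ∑ n1, ‖u1 n1‖ := by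
    rcases Nat.eq_zero_or_pos N with h0 | h0
    · subst h0; simp [hδ1]
    · have hN : (N : ℝ) ≠ 0 := Nat.cast_ne_zero.mpr h0.ne'
      rw [hδ1]; field_simp
  have hδ2' : (N : ℝ) * δ2 = ∑ n2, ‖u2 n2‖ := by
    rcases Nat.eq_zero_or_pos N with h0 | h0
    · subst h0; simp [hδ2]
    · have hN : (N : ℝ) ≠ 0 := Nat.cast_ne_zero.mpr h0.ne'
      rw [hδ2]; field_simp
  have base_eq : (1/2 : ℝ) * Real.cos β2 * Real.cos β1 * (N : ℝ)^2 * δ1 * δ2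
      = Real.cos β2 * ((1/2) * ((Real.cos β1 * ∑ n1, ‖u1 n1‖)
          * ∑ n2, ‖u2 n2‖)) := by
    rw [← hδ1', ← hδ2']; ring
  have hsum2 : (1/2 : ℝ) * (‖S‖ * ∑ n2, ‖u2 n2‖)
      ≤ ∑ n2, ‖ξ n2‖ := by
    calc (1/2 : ℝ) * (‖S‖ * ∑ n2, ‖u2 n2‖)
        = ∑ n2, (1/2 : ℝ) * (‖u2 n2‖ * ‖S‖) := by
          rw [Finset.mul_sum, Finset.mul_sum]
          exact Finset.sum_congr rfl fun _ _ => by ring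
      _ ≤ ∑ n2, ‖ξ n2‖ := Finset.sum_le_sum fun n2 _ => hξabs n2
  have hu2sum : (0:ℝ) ≤ ∑ n2, ‖u2 n2‖ :=
    Finset.sum_nonneg fun _ _ => norm_nonneg _
  have hu1sum : (0:ℝ) ≤ ∑ n1, ‖u1 n1‖ :=
    Finset.sum_nonneg fun _ _ => norm_nonneg _
  have hfinal : (1/2 : ℝ) * Real.cos β2 * Real.cos β1 * (N : ℝ)^2 * δ1 * δ2
      ≤ ‖d + ∑ n2, ξ n2 * Complex.exp ((θ2 n2 : ℂ) * Complex.I)‖ := by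
    rw [base_eq]
    calc Real.cos β2 * ((1/2) * ((Real.cos β1 * ∑ n1, ‖u1 n1‖)
            * ∑ n2, ‖u2 n2‖))
        ≤ Real.cos β2 * ((1/2) * (‖S‖ * ∑ n2, ‖u2 n2‖)) := by
          apply mul_le_mul_of_nonneg_left _ cb2.le
          apply mul_le_mul_of_nonneg_left _ (by norm_num)
          exact mul_le_mul_of_nonneg_right hS1 hu2sum
      _ ≤ Real.cos β2 * ∑ n2, ‖ξ n2‖ :=
          mul_le_mul_of_nonneg_left hsum2 cb2.le
      _ ≤ _ := hGabs
  have hbase : (0:ℝ) ≤ (1/2 : ℝ) * Real.cos β2 * Real.cos β1 * (N : ℝ)^2 * δ1 * δ2 := by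
    have hδ1n : 0 ≤ δ1 := by
      rw [hδ1]; exact mul_nonneg (by positivity) hu1sum
    have hδ2n : 0 ≤ δ2 := by
      rw [hδ2]; exact mul_nonneg (by positivity) hu2sum
    have hc : (0:ℝ) ≤ (1/2 : ℝ) * Real.cos β2 * Real.cos β1 * (N : ℝ)^2 :=
      mul_nonneg (mul_nonneg (mul_nonneg (by norm_num) cb2.le) cb1.le) (sq_nonneg _)
    exact mul_nonneg (mul_nonneg hc hδ1n) hδ2n
  rw [hG]
  exact pow_le_pow_left₀ hbase hfinal 2
end

section
/- Let u^{(ℓ)}_n ∈ ℂ be nonzero for ℓ ∈ {1,…,L-1}, n ∈ {1,…,N}, and for each ℓ, n let θ'_n^{(ℓ)} satisfy |θ'_n^{(ℓ)} + arg(u^{(ℓ)}_n) - c_ℓ| ≤ β_ℓ (mod 2π) for fixed constants c_ℓ and β_ℓ ≥ 0 with Σ_{ℓ=1}^{L-1} β_ℓ < π/2. Then |Σ over all tuples (n_1,…,n_{L-1}) ∈ [1:N]^{L-1} of Π_ℓ u^{(ℓ)}_{nℓ} e^{iθ'_{nℓ}^{(ℓ)}}| ≥ cos(Σ_ℓ β_ℓ)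 · Π_ℓ Σ_n |u^{(ℓ)}_n|. -/
open Real Complex

lemma toReal_add_of_lt_pi (a b : Real.Angle) (h : |a.toReal| + |b.toReal| < π) :
    (a + b).toReal = a.toReal + b.toReal := by
  have he : ((a.toReal + b.toReal : ℝ) : Real.Angle) = a + b := by
    rw [Real.Angle.coe_add, Real.Angle.coe_toReal, Real.Angle.coe_toReal]
  rw [← he, Real.Angle.toReal_coe_eq_self_iff]
  have h1 := abs_lt.mp (lt_of_le_of_lt (abs_add_le a.toReal b.toReal) h)
  exact ⟨h1.1, h1.2.le⟩

lemma abs_toReal_sum_le {ι : Type*} (s : Finset ι) (x b : ι → ℝ)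
    (hb : ∀ i, |((x i : Real.Angle)).toReal| ≤ b i) (hb0 : ∀ i, 0 ≤ b i)
    (h : ∑ i ∈ s, b i < π) :
    |((↑(∑ i ∈ s, x i) : Real.Angle)).toReal| ≤ ∑ i ∈ s, b i := by
  classical
  induction s using Finset.induction_on with
  | empty => simp [Real.Angle.toReal_zero]
  | @insert a s ha ih =>
    rw [Finset.sum_insert ha] at h ⊢
    rw [Finset.sum_insert ha]
    have hs : ∑ i ∈ s, b i < π := by
      have := hb0 a; linarith
    have ih' := ih hs
    have hlt : |((x a : Real.Angle)).toReal| + |((↑(∑ i ∈ s, x i) : Real.Angle)).toReal| < π := by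
      have := hb a; linarith
    rw [Real.Angle.coe_add, toReal_add_of_lt_pi _ _ hlt]
    exact le_trans (abs_add_le _ _) (add_le_add (hb a) ih')

theorem multi_irs_product_sum_lower_bound (L N : ℕ) (hL : 2 ≤ L) (hN : 1 ≤ N)
    (u : Fin (L - 1) → Fin N → ℂ) (hu : ∀ ℓ n, u ℓ n ≠ 0)
    (θ' : Fin (L - 1) → Fin N → ℝ) (c β : Fin (L - 1) → ℝ)
    (hβ0 : ∀ ℓ, 0 ≤ β ℓ) (hβsum : (∑ ℓ, β ℓ) < π / 2)
    (hθ : ∀ ℓ n, angDist (θ' ℓ n + Complex.arg (u ℓ n)) (c ℓ) ≤ β ℓ) :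
    Real.cos (∑ ℓ, β ℓ) * ∏ ℓ, ∑ n, ‖u ℓ n‖ ≤
      ‖∑ f : Fin (L - 1) → Fin N,
        ∏ ℓ, u ℓ (f ℓ) * Complex.exp ((θ' ℓ (f ℓ) : ℂ) * Complex.I)‖ := by
  classical
  set T := ∑ ℓ, β ℓ with hT
  set c0 := ∑ ℓ, c ℓ with hc0
  set S := ∑ f : Fin (L - 1) → Fin N,
        ∏ ℓ, u ℓ (f ℓ) * Complex.exp ((θ' ℓ (f ℓ) : ℂ) * Complex.I) with hS
  -- |S| ≥ re (exp(-c0 i) S)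
  have habs : (Complex.exp ((↑(-c0) : ℂ) * Complex.I) * S).re ≤ ‖S‖ := by
    calc (Complex.exp ((↑(-c0) : ℂ) * Complex.I) * S).re
        ≤ ‖Complex.exp ((↑(-c0) : ℂ) * Complex.I) * S‖ := Complex.re_le_norm _
      _ = ‖S‖ := by
          rw [norm_mul, Complex.norm_exp_ofReal_mul_I, one_mul]
  refine le_trans ?_ habs
  -- termwise identity
  have hterm : ∀ f : Fin (L - 1) → Fin N,
      Complex.exp ((↑(-c0) : ℂ) * Complex.I) *
        ∏ ℓ, u ℓ (f ℓ) * Complex.exp ((θ' ℓ (f ℓ) : ℂ) * Complex.I) =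
      (↑(∏ ℓ, ‖u ℓ (f ℓ)‖) : ℂ) *
        Complex.exp ((↑(∑ ℓ, (θ' ℓ (f ℓ) + Complex.arg (u ℓ (f ℓ)) - c ℓ)) : ℂ) * Complex.I) := by
    intro f
    have hfac : ∀ ℓ : Fin (L - 1), u ℓ (f ℓ) * Complex.exp ((θ' ℓ (f ℓ) : ℂ) * Complex.I) =
        (↑(‖u ℓ (f ℓ)‖) : ℂ) *
          Complex.exp ((↑(θ' ℓ (f ℓ) + Complex.arg (u ℓ (f ℓ))) : ℂ) * Complex.I) := by
      intro ℓ
      conv_lhs => rw [← Complex.norm_mul_exp_arg_mul_I (u ℓ (f ℓ))]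
      rw [mul_assoc, ← Complex.exp_add]
      congr 1
      push_cast
      ring
    rw [Finset.prod_congr rfl (fun ℓ _ => hfac ℓ), Finset.prod_mul_distrib,
      ← Complex.exp_sum]
    have hsum1 : ∑ ℓ, (↑(θ' ℓ (f ℓ) + Complex.arg (u ℓ (f ℓ))) : ℂ) * Complex.I =
        (↑(∑ ℓ, (θ' ℓ (f ℓ) + Complex.arg (u ℓ (f ℓ)))) : ℂ) * Complex.I := by
      push_cast
      rw [Finset.sum_mul]
    rw [hsum1, ← mul_assoc, mul_comm (Complex.exp _) _, mul_assoc, ← Complex.exp_add,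
      ← add_mul, ← Complex.ofReal_add,
      show (-c0 + ∑ ℓ, (θ' ℓ (f ℓ) + Complex.arg (u ℓ (f ℓ))))
          = ∑ ℓ, (θ' ℓ (f ℓ) + Complex.arg (u ℓ (f ℓ)) - c ℓ) from by
        rw [hc0, Finset.sum_sub_distrib]; ring,
      Complex.ofReal_prod]
  -- re of each term
  have hre : ∀ f : Fin (L - 1) → Fin N,
      (Complex.exp ((↑(-c0) : ℂ) * Complex.I) *
        ∏ ℓ, u ℓ (f ℓ) * Complex.exp ((θ' ℓ (f ℓ) : ℂ) * Complex.I)).re =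
      (∏ ℓ, ‖u ℓ (f ℓ)‖) *
        Real.cos (∑ ℓ, (θ' ℓ (f ℓ) + Complex.arg (u ℓ (f ℓ)) - c ℓ)) := by
    intro f
    rw [hterm f]
    rw [Complex.re_ofReal_mul, Complex.exp_ofReal_mul_I_re]
  -- cos bound
  have hcos : ∀ f : Fin (L - 1) → Fin N,
      Real.cos T ≤ Real.cos (∑ ℓ, (θ' ℓ (f ℓ) + Complex.arg (u ℓ (f ℓ)) - c ℓ)) := by
    intro f
    set φ := ∑ ℓ, (θ' ℓ (f ℓ) + Complex.arg (u ℓ (f ℓ)) - c ℓ) with hφ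
    have hb : ∀ ℓ : Fin (L - 1),
        |(((θ' ℓ (f ℓ) + Complex.arg (u ℓ (f ℓ)) - c ℓ : ℝ) : Real.Angle)).toReal| ≤ β ℓ :=
      fun ℓ => hθ ℓ (f ℓ)
    have hπ : T < π := lt_trans hβsum (by linarith [Real.pi_pos])
    have hsub := abs_toReal_sum_le Finset.univ
      (fun ℓ => θ' ℓ (f ℓ) + Complex.arg (u ℓ (f ℓ)) - c ℓ) β hb hβ0 (by rw [← hT]; exact hπ)
    rw [← hT] at hsub
    set t := ((↑φ : Real.Angle)).toReal with ht
    have hcoseq : Real.cos φ = Real.cos t := by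
      rw [ht, Real.Angle.cos_toReal, Real.Angle.cos_coe]
    rw [hcoseq]
    nth_rewrite 2 [← Real.cos_abs]
    exact Real.cos_le_cos_of_nonneg_of_le_pi (abs_nonneg t) hπ.le hsub
  -- combine
  calc Real.cos T * ∏ ℓ, ∑ n, ‖u ℓ n‖
      = ∑ f : Fin (L - 1) → Fin N, Real.cos T * ∏ ℓ, ‖u ℓ (f ℓ)‖ := by
        rw [Fintype.prod_sum, Finset.mul_sum]
    _ ≤ ∑ f : Fin (L - 1) → Fin N, (∏ ℓ, ‖u ℓ (f ℓ)‖) *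
          Real.cos (∑ ℓ, (θ' ℓ (f ℓ) + Complex.arg (u ℓ (f ℓ)) - c ℓ)) := by
        refine Finset.sum_le_sum fun f _ => ?_
        rw [mul_comm]
        exact mul_le_mul_of_nonneg_left (hcos f)
          (Finset.prod_nonneg fun ℓ _ => norm_nonneg _)
    _ = (∑ f : Fin (L - 1) → Fin N, Complex.exp ((↑(-c0) : ℂ) * Complex.I) *
          ∏ ℓ, u ℓ (f ℓ) * Complex.exp ((θ' ℓ (f ℓ) : ℂ) * Complex.I)).re := by
        rw [Complex.re_sum]
        exact (Finset.sum_congr rfl fun f _ => (hre f)).symm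
    _ = (Complex.exp ((↑(-c0) : ℂ) * Complex.I) * S).re := by rw [hS, Finset.mul_sum]
end

section
/- Let d ∈ ℂ nonzero and let a_1, …, a_N ∈ ℂ. For each n, let θ'_n ∈ Φ_K (K ≥ 3) minimize the angular distance to arg(d) - arg(a_n). Then Re(conj(d)·Σ_n a_n e^{iθ'_n}) ≥ cos(π/K)·|d|·Σ_n |a_n|, and consequently |d + Σ_n a_n e^{iθ'_n}|² ≥ |d|² + 2cos(π/K)|d|Σ_n|a_n| + (cos(π/K) Σ_n |a_n|)². -/
open Real Complex

lemma re_formula (d z : ℂ) (θ : ℝ) :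
    ((starRingEnd ℂ) d * (z * Complex.exp ((θ:ℂ) * Complex.I))).re
      = ‖d‖ * ‖z‖ * Real.cos (θ - (d.arg - z.arg)) := by
  conv_lhs => rw [← Complex.norm_mul_exp_arg_mul_I d, ← Complex.norm_mul_exp_arg_mul_I z]
  rw [map_mul, ← Complex.exp_conj]
  simp only [map_mul, Complex.conj_ofReal, Complex.conj_I, mul_neg]
  have h1 : Complex.exp (-(↑d.arg * Complex.I)) *
      (Complex.exp (↑z.arg * Complex.I) * Complex.exp ((θ:ℂ) * Complex.I))
      = Complex.exp ((↑(θ - (d.arg - z.arg)) : ℝ) * Complex.I) := by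
    rw [← Complex.exp_add, ← Complex.exp_add]; congr 1; push_cast; ring
  calc (↑‖d‖ * Complex.exp (-(↑d.arg * Complex.I)) *
        (↑‖z‖ * Complex.exp (↑z.arg * Complex.I) * Complex.exp ((θ:ℂ) * Complex.I))).re
      = ((↑(‖d‖ * ‖z‖) : ℂ) *
        (Complex.exp (-(↑d.arg * Complex.I)) *
          (Complex.exp (↑z.arg * Complex.I) * Complex.exp ((θ:ℂ) * Complex.I)))).re := by
        push_cast; ring_nf
    _ = ‖d‖ * ‖z‖ * Real.cos (θ - (d.arg - z.arg)) := by
        rw [h1, Complex.re_ofReal_mul, Complex.exp_ofReal_mul_I_re]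

lemma grid_cover (K : ℕ) (hK : 3 ≤ K) (φ : ℝ) :
    ∃ k ∈ Finset.Icc 1 K, angDist (2 * π * k / K) φ ≤ π / K := by
  have hKpos : (0:ℝ) < K := by exact_mod_cast Nat.lt_of_lt_of_le (by norm_num) hK
  have hKZ : (0:ℤ) < (K:ℤ) := by exact_mod_cast Nat.lt_of_lt_of_le (by norm_num) hK
  set t : ℝ := φ * K / (2 * π) with ht
  set k0 : ℤ := round t with hk0
  set m : ℤ := k0 % K with hm
  have hm0 : 0 ≤ m := Int.emod_nonneg _ (by omega)
  have hmK : m < K := Int.emod_lt_of_pos _ hKZ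
  have hdiv : (K:ℤ) * (k0 / K) + m = k0 := Int.mul_ediv_add_emod k0 K
  set k : ℕ := if m = 0 then K else m.toNat with hk
  have hkZ : ∃ j : ℤ, (k:ℤ) - k0 = K * j := by
    by_cases h0 : m = 0
    · refine ⟨1 - k0 / K, ?_⟩
      rw [h0, add_zero] at hdiv
      have hkK : (k:ℤ) = K := by simp [hk, h0]
      rw [hkK, mul_sub, mul_one, hdiv]
    · refine ⟨-(k0 / K), ?_⟩
      have hkm : (k:ℤ) = m := by simp [hk, h0, Int.toNat_of_nonneg hm0]
      have hr : (K:ℤ) * -(k0 / K) = -((K:ℤ) * (k0 / K)) := by ring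
      rw [hkm, hr]; linarith
  refine ⟨k, ?_, ?_⟩
  · simp only [Finset.mem_Icc]
    constructor
    · by_cases h0 : m = 0 <;> simp [hk, h0] <;> omega
    · by_cases h0 : m = 0 <;> simp [hk, h0] <;> omega
  · obtain ⟨j, hj⟩ := hkZ
    have hcast : ((k:ℝ)) - (k0:ℝ) = (K:ℝ) * (j:ℝ) := by exact_mod_cast hj
    have hangle : ((2 * π * k / K - φ : ℝ) : Real.Angle) = ((2 * π * k0 / K - φ : ℝ) : Real.Angle) := by
      rw [Real.Angle.angle_eq_iff_two_pi_dvd_sub]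
      refine ⟨j, ?_⟩
      have : 2 * π * (k:ℝ) / K - φ - (2 * π * (k0:ℝ) / K - φ) = 2 * π * ((k:ℝ) - (k0:ℝ)) / K := by
        ring
      rw [this, hcast]
      field_simp
    have hb : |2 * π * (k0:ℝ) / K - φ| ≤ π / K := by
      have heq : 2 * π * (k0:ℝ) / K - φ = (2 * π / K) * ((k0:ℝ) - t) := by
        rw [ht]; field_simp
      rw [heq, abs_mul, abs_of_pos (by positivity : (0:ℝ) < 2 * π / K)]
      have hr : |(k0:ℝ) - t| ≤ 1 / 2 := by
        rw [hk0, abs_sub_comm]; exact abs_sub_round t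
      calc 2 * π / K * |(k0:ℝ) - t| ≤ 2 * π / K * (1/2) :=
            mul_le_mul_of_nonneg_left hr (by positivity)
        _ = π / K := by ring
    have h1K : (1:ℝ) < K := by exact_mod_cast Nat.lt_of_lt_of_le (by norm_num) hK
    have hlt : π / K < π := by
      rw [div_lt_iff₀ hKpos]
      nlinarith [Real.pi_pos]
    have hself : ((2 * π * (k0:ℝ) / K - φ : ℝ) : Real.Angle).toReal = 2 * π * (k0:ℝ) / K - φ := by
      rw [Real.Angle.toReal_coe_eq_self_iff]
      rw [abs_le] at hb
      constructor <;> linarith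
    unfold angDist
    rw [hangle, hself]
    exact hb

theorem cpp_lower_bound_full (N K : ℕ) (hK : 3 ≤ K)
    (d : ℂ) (hd : d ≠ 0) (a : Fin N → ℂ) (ha : ∀ n, a n ≠ 0)
    (θ' : Fin N → ℝ)
    (hmem : ∀ n, ∃ k ∈ Finset.Icc 1 K, θ' n = 2 * π * k / K)
    (hmin : ∀ n, ∀ k ∈ Finset.Icc 1 K,
      angDist (θ' n) (Complex.arg d - Complex.arg (a n)) ≤
        angDist (2 * π * k / K) (Complex.arg d - Complex.arg (a n))) :
    Real.cos (π / K) * ‖d‖ * (∑ n, ‖a n‖) ≤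
        ((starRingEnd ℂ) d * ∑ n, a n * Complex.exp ((θ' n : ℂ) * Complex.I)).re
      ∧ ‖d‖ ^ 2 + 2 * Real.cos (π / K) * ‖d‖ * (∑ n, ‖a n‖)
          + (Real.cos (π / K) * ∑ n, ‖a n‖) ^ 2 ≤
        ‖d + ∑ n, a n * Complex.exp ((θ' n : ℂ) * Complex.I)‖ ^ 2 := by
  have hKpos : (0:ℝ) < K := by exact_mod_cast Nat.lt_of_lt_of_le (by norm_num) hK
  have h3K : (3:ℝ) ≤ K := by exact_mod_cast hK
  have hπ2 : π / K ≤ π / 2 := by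
    rw [div_le_div_iff₀ hKpos (by norm_num)]
    have := mul_le_mul_of_nonneg_left h3K Real.pi_pos.le
    linarith [Real.pi_pos]
  have hπK : π / K ≤ π := le_trans hπ2 (by linarith [Real.pi_pos])
  -- per-term bound
  have hterm : ∀ n, Real.cos (π / K) * (‖d‖ * ‖a n‖) ≤
      ((starRingEnd ℂ) d * (a n * Complex.exp ((θ' n : ℂ) * Complex.I))).re := by
    intro n
    obtain ⟨k, hkm, hkb⟩ := grid_cover K hK (Complex.arg d - Complex.arg (a n))
    have h1 : angDist (θ' n) (Complex.arg d - Complex.arg (a n)) ≤ π / K :=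
      le_trans (hmin n k hkm) hkb
    rw [re_formula]
    have hcoseq : Real.cos (θ' n - (d.arg - (a n).arg))
        = Real.cos (angDist (θ' n) (Complex.arg d - Complex.arg (a n))) := by
      unfold angDist
      rw [Real.cos_abs, Real.Angle.cos_toReal, Real.Angle.cos_coe]
    have hcos : Real.cos (π / K) ≤ Real.cos (θ' n - (d.arg - (a n).arg)) := by
      rw [hcoseq]
      exact Real.cos_le_cos_of_nonneg_of_le_pi (abs_nonneg _) hπK h1
    nlinarith [norm_nonneg d, norm_nonneg (a n),
      mul_le_mul_of_nonneg_left hcos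
        (mul_nonneg (norm_nonneg d) (norm_nonneg (a n)))]
  -- part 1
  have part1 : Real.cos (π / K) * ‖d‖ * (∑ n, ‖a n‖) ≤
      ((starRingEnd ℂ) d * ∑ n, a n * Complex.exp ((θ' n : ℂ) * Complex.I)).re := by
    have hR : ((starRingEnd ℂ) d * ∑ n, a n * Complex.exp ((θ' n : ℂ) * Complex.I)).re
        = ∑ n, ((starRingEnd ℂ) d * (a n * Complex.exp ((θ' n : ℂ) * Complex.I))).re := by
      rw [Finset.mul_sum, Complex.re_sum]
    rw [hR]
    calc Real.cos (π / K) * ‖d‖ * (∑ n, ‖a n‖)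
        = ∑ n, Real.cos (π / K) * (‖d‖ * ‖a n‖) := by
          rw [Finset.mul_sum]; congr 1; ext n; ring
      _ ≤ _ := Finset.sum_le_sum fun n _ => hterm n
  refine ⟨part1, ?_⟩
  set S : ℂ := ∑ n, a n * Complex.exp ((θ' n : ℂ) * Complex.I) with hS
  have hc0 : 0 ≤ Real.cos (π / K) := by
    apply Real.cos_nonneg_of_mem_Icc
    constructor
    · have : (0:ℝ) ≤ π / K := by positivity
      linarith [Real.pi_pos]
    · exact hπ2
  have hsum0 : (0:ℝ) ≤ ∑ n, ‖a n‖ :=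
    Finset.sum_nonneg fun n _ => norm_nonneg _
  have hd0 : 0 < ‖d‖ := norm_pos_iff.mpr hd
  have hSabs : Real.cos (π / K) * (∑ n, ‖a n‖) ≤ ‖S‖ := by
    have h2 : ((starRingEnd ℂ) d * S).re ≤ ‖d‖ * ‖S‖ := by
      calc ((starRingEnd ℂ) d * S).re ≤ ‖(starRingEnd ℂ) d * S‖ := Complex.re_le_norm _
        _ = ‖d‖ * ‖S‖ := by rw [norm_mul, Complex.norm_conj]
    have h3 : ‖d‖ * (Real.cos (π / K) * (∑ n, ‖a n‖))
        ≤ ‖d‖ * ‖S‖ := by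
      calc ‖d‖ * (Real.cos (π / K) * (∑ n, ‖a n‖))
          = Real.cos (π / K) * ‖d‖ * (∑ n, ‖a n‖) := by ring
        _ ≤ ((starRingEnd ℂ) d * S).re := part1
        _ ≤ _ := h2
    exact le_of_mul_le_mul_left h3 hd0
  have hsq : (Real.cos (π / K) * (∑ n, ‖a n‖))^2 ≤ ‖S‖ ^ 2 :=
    pow_le_pow_left₀ (mul_nonneg hc0 hsum0) hSabs 2
  have hre2 : (d * (starRingEnd ℂ) S).re = ((starRingEnd ℂ) d * S).re := by
    rw [← Complex.conj_re (d * (starRingEnd ℂ) S), map_mul, Complex.conj_conj]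
  have hexp : ‖d + S‖ ^ 2
      = ‖d‖ ^ 2 + ‖S‖ ^ 2 + 2 * ((starRingEnd ℂ) d * S).re := by
    rw [Complex.sq_norm, Complex.sq_norm, Complex.sq_norm, Complex.normSq_add, hre2]
  rw [hexp]
  linarith
end

section
/- Suppose for all n₁ ∈ {1,…,N}: |h_{n1,0}| ≤ sin(γ)·|Σ_{n2=1}^N h_{n1,n2}| with γ ∈ [0, π/2) and Σ_{n2} h_{n1,n2} ≠ 0. Then for each n1, the angular distance between arg(h_{n1,0} + Σ_{n2} h_{n1,n2}) and arg(Σ_{n2} h_{n1,n2}) is at most γ. -/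
open Real Complex

lemma arg_one_add_le {w : ℂ} {γ : ℝ} (hγ0 : 0 ≤ γ) (hγ1 : γ < π / 2)
    (hw : ‖w‖ ≤ Real.sin γ) : |Complex.arg (1 + w)| ≤ γ := by
  have hs1 : Real.sin γ < 1 := by
    have := Real.sin_lt_sin_of_lt_of_le_pi_div_two (by linarith [Real.pi_pos] : -(π/2) ≤ γ)
      (le_refl (π/2)) hγ1
    simpa using this
  have hs0 : 0 ≤ Real.sin γ := Real.sin_nonneg_of_nonneg_of_le_pi hγ0 (by linarith [Real.pi_pos])
  set z : ℂ := 1 + w with hz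
  have hre : 1 - Real.sin γ ≤ z.re := by
    have h1 : |w.re| ≤ ‖w‖ := Complex.abs_re_le_norm w
    have : -Real.sin γ ≤ w.re := by
      have := (abs_le.mp h1).1; linarith
    simp [hz]; linarith
  have hzre : 0 < z.re := by linarith
  have hzne : z ≠ 0 := fun h0 => by simp [h0] at hzre
  have hzabs : 0 < ‖z‖ := norm_pos_iff.mpr hzne
  -- key inequality : |im z| ≤ sin γ * |z|
  have him : |z.im| ≤ Real.sin γ * ‖z‖ := by
    have h2 : |z.im| ^ 2 ≤ (Real.sin γ * ‖z‖) ^ 2 := by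
      have hzsq : ‖z‖ ^ 2 = z.re ^ 2 + z.im ^ 2 := by
        rw [Complex.sq_norm, Complex.normSq_apply]; ring
      have hwsq : ‖w‖ ^ 2 = w.re ^ 2 + w.im ^ 2 := by
        rw [Complex.sq_norm, Complex.normSq_apply]; ring
      have hzre' : z.re = 1 + w.re := by simp [hz]
      have hzim' : z.im = w.im := by simp [hz]
      have hwre : |w.re| ≤ ‖w‖ := Complex.abs_re_le_norm w
      have hwre' := (abs_le.mp hwre).1
      have hwabs0 : 0 ≤ ‖w‖ := norm_nonneg w
      rw [_root_.sq_abs, mul_pow, hzsq, hzre', hzim']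
      nlinarith [sq_nonneg (w.re + Real.sin γ ^ 2),
        mul_nonneg (by nlinarith : (0:ℝ) ≤ 1 - Real.sin γ ^ 2)
          (by nlinarith : (0:ℝ) ≤ Real.sin γ ^ 2 - ‖w‖ ^ 2)]
    have h3 : 0 ≤ Real.sin γ * ‖z‖ := mul_nonneg hs0 hzabs.le
    exact le_of_pow_le_pow_left₀ two_ne_zero h3 h2
  -- |sin (arg z)| ≤ sin γ
  have hsin : |Real.sin (Complex.arg z)| ≤ Real.sin γ := by
    rw [Complex.sin_arg, abs_div, abs_of_pos hzabs, div_le_iff₀ hzabs]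
    exact him
  have harg : |Complex.arg z| < π / 2 := Complex.abs_arg_lt_pi_div_two_iff.mpr (Or.inl hzre)
  by_contra hcon
  push_neg at hcon
  have h4 : Real.sin γ < Real.sin |Complex.arg z| :=
    Real.sin_lt_sin_of_lt_of_le_pi_div_two (by linarith [abs_nonneg (Complex.arg z), Real.pi_pos])
      harg.le hcon
  have h5 : Real.sin |Complex.arg z| ≤ |Real.sin (Complex.arg z)| := by
    rcases abs_cases (Complex.arg z) with ⟨he, _⟩ | ⟨he, _⟩
    · rw [he]; exact le_abs_self _
    · rw [he, Real.sin_neg]; exact neg_le_abs _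
  linarith

theorem row_sum_angle_bound (N : ℕ) (h10 : Fin N → ℂ) (h : Fin N → Fin N → ℂ)
    (γ : ℝ) (hγ0 : 0 ≤ γ) (hγ1 : γ < π / 2)
    (hrow : ∀ n1, (∑ n2, h n1 n2) ≠ 0)
    (hle : ∀ n1, ‖h10 n1‖ ≤ Real.sin γ * ‖∑ n2, h n1 n2‖) :
    ∀ n1,
      angDist (Complex.arg (h10 n1 + ∑ n2, h n1 n2)) (Complex.arg (∑ n2, h n1 n2)) ≤ γ := by
  intro n1
  set a := h10 n1
  set s := ∑ n2, h n1 n2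
  have hs := hrow n1
  have hsabs : 0 < ‖s‖ := norm_pos_iff.mpr hs
  have hs1 : Real.sin γ < 1 := by
    have := Real.sin_lt_sin_of_lt_of_le_pi_div_two (by linarith [Real.pi_pos] : -(π/2) ≤ γ)
      (le_refl (π/2)) hγ1
    simpa using this
  have hw : ‖a / s‖ ≤ Real.sin γ := by
    rw [norm_div, div_le_iff₀ hsabs]
    exact hle n1
  have hne : a + s ≠ 0 := by
    intro h0
    have : ‖a‖ = ‖s‖ := by
      have : a = -s := by linear_combination h0
      rw [this, norm_neg]
    nlinarith [hle n1]
  have hkey : |Complex.arg (1 + a / s)| ≤ γ := arg_one_add_le hγ0 hγ1 hw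
  have hdiv : (a + s) / s = 1 + a / s := by rw [add_div, div_self (show s ≠ 0 from hs), add_comm]
  have heq : ((Complex.arg (a + s) - Complex.arg s : ℝ) : Real.Angle)
      = (Complex.arg ((a + s) / s) : Real.Angle) := by
    rw [Complex.arg_div_coe_angle hne hs, Real.Angle.coe_sub]
  unfold angDist
  rw [heq, Complex.arg_coe_angle_toReal_eq_arg, hdiv]
  exact hkey
end
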